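/- Given positive integers d_1, ..., d_n and a prime p ≥ 2n+1 with p not dividing any d_i, there exist 2n integers x_1, ..., x_n, y_1, ..., y_n, all pairwise distinct modulo p, such that x_i + d_i ≡ y_i (mod p) for every i. -/

import Mathlib

open MvPolynomial Finset
open scoped Nat

noncomputable def PMQ {N : ℕ} (a : Fin N → ℕ) : MvPolynomial (Fin N) ℤ :=
  ∏ e ∈ (univ : Finset (Fin N)).offDiag, (X e.2 - X e.1) ^ (a e.1)

lemma PMQ_eval {N : ℕ} (a : Fin N → ℕ) (x : Fin N → ℤ) :
    eval x (PMQ a) = ∏ e ∈ (univ : Finset (Fin N)).offDiag,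
      (x e.2 - x e.1) ^ (a e.1) := by
  simp [PMQ, eval_prod]

lemma PM_lagrange {F : Type*} [Field F] {N : ℕ} (hN : 0 < N) (y : Fin N → F)
    (hy : Function.Injective y) :
    ∑ k : Fin N, ∏ j ∈ (univ : Finset (Fin N)).erase k, (y j / (y j - y k)) = 1 := by
  have hvs : Set.InjOn y (univ : Finset (Fin N)) := fun a _ b _ h => hy h
  have hne : (univ : Finset (Fin N)).Nonempty := univ_nonempty_iff.2 (Fin.pos_iff_nonempty.1 hN)
  have h1 := Lagrange.interpolate_one hvs hne
  have h0 := congrArg (Polynomial.eval (0 : F)) h1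
  rw [Lagrange.interpolate_apply] at h0
  simp only [Polynomial.eval_finset_sum, Polynomial.eval_mul, Polynomial.eval_C,
    Polynomial.eval_one, Pi.one_apply, one_mul] at h0
  rw [← h0]
  apply Finset.sum_congr rfl
  intro k _
  rw [Lagrange.basis, Polynomial.eval_prod]
  apply Finset.prod_congr rfl
  intro j hj
  have hjk : j ≠ k := (Finset.mem_erase.1 hj).1
  have hne' : y j - y k ≠ 0 := sub_ne_zero.2 (fun h => hjk (hy h))
  rw [Lagrange.basisDivisor]
  simp only [Polynomial.eval_mul, Polynomial.eval_C, Polynomial.eval_sub, Polynomial.eval_X]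
  have hne2 : y k - y j ≠ 0 := sub_ne_zero.2 (fun h => hjk (hy h).symm)
  field_simp
  ring

lemma PM_split {F : Type*} [CommRing F] {N : ℕ} (b : Fin N → ℕ) (y : Fin N → F) (k : Fin N) :
    ∏ e ∈ (univ : Finset (Fin N)).offDiag, (y e.2 - y e.1) ^ (b e.1)
      = (∏ j ∈ (univ : Finset (Fin N)).erase k, (y j - y k) ^ (b k)) *
        ∏ e ∈ (univ : Finset (Fin N)).offDiag.filter (fun e => ¬ e.1 = k),
          (y e.2 - y e.1) ^ (b e.1) := by
  rw [← Finset.prod_filter_mul_prod_filter_not (univ : Finset (Fin N)).offDiag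
    (fun e => e.1 = k)]
  congr 1
  apply Finset.prod_bij (fun (e : Fin N × Fin N) _ => e.2)
  · intro e he
    simp only [mem_filter, mem_offDiag] at he
    exact Finset.mem_erase.2 ⟨fun h => he.1.2.2 (by rw [he.2, h]), mem_univ _⟩
  · intro e1 h1 e2 h2 h
    simp only [mem_filter, mem_offDiag] at h1 h2
    exact Prod.ext (h1.2.trans h2.2.symm) h
  · intro j hj
    refine ⟨(k, j), ?_, rfl⟩
    simp only [mem_filter, mem_offDiag]
    exact ⟨⟨mem_univ _, mem_univ _, fun h => (Finset.mem_erase.1 hj).1 h.symm⟩, trivial⟩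
  · intro e he
    simp only [mem_filter] at he
    rw [he.2]

lemma PMQ_rec {N : ℕ} (hN : 0 < N) (a : Fin N → ℕ) (ha : ∀ k, 1 ≤ a k) :
    PMQ a = ∑ k : Fin N, (∏ j ∈ (univ : Finset (Fin N)).erase k, X j) *
      PMQ (Function.update a k (a k - 1)) := by
  apply MvPolynomial.funext
  intro x
  rw [map_sum, PMQ_eval]
  have heval : ∀ k : Fin N, eval x ((∏ j ∈ (univ : Finset (Fin N)).erase k, X j) *
      PMQ (Function.update a k (a k - 1)))
      = (∏ j ∈ (univ : Finset (Fin N)).erase k, x j) *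
        ∏ e ∈ (univ : Finset (Fin N)).offDiag,
          (x e.2 - x e.1) ^ (Function.update a k (a k - 1) e.1) := by
    intro k
    rw [map_mul, PMQ_eval, eval_prod]
    simp
  simp only [heval]
  by_cases hinj : Function.Injective x
  · set y : Fin N → ℚ := fun i => (x i : ℚ) with hy
    have hyinj : Function.Injective y := fun i j h => hinj (Int.cast_injective (α := ℚ) h)
    have hsub : ∀ i j : Fin N, i ≠ j → y i - y j ≠ 0 :=
      fun i j hij => sub_ne_zero.2 (fun h => hij (hyinj h))
    apply (Int.cast_injective (α := ℚ))
    push_cast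
    have hterm : ∀ k : Fin N,
        (∏ j ∈ (univ : Finset (Fin N)).erase k, (x j : ℚ)) *
          ∏ e ∈ (univ : Finset (Fin N)).offDiag,
            ((x e.2 : ℚ) - (x e.1 : ℚ)) ^ (Function.update a k (a k - 1) e.1)
        = (∏ j ∈ (univ : Finset (Fin N)).erase k, (y j / (y j - y k))) *
          ∏ e ∈ (univ : Finset (Fin N)).offDiag, (y e.2 - y e.1) ^ (a e.1) := by
      intro k
      have h1 := PM_split (Function.update a k (a k - 1)) y k
      have h2 := PM_split a y k
      change (∏ j ∈ (univ : Finset (Fin N)).erase k, y j) *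
          ∏ e ∈ (univ : Finset (Fin N)).offDiag,
            (y e.2 - y e.1) ^ (Function.update a k (a k - 1) e.1) = _
      rw [h1, h2]
      have hrest : ∏ e ∈ (univ : Finset (Fin N)).offDiag.filter (fun e => ¬ e.1 = k),
          (y e.2 - y e.1) ^ (Function.update a k (a k - 1) e.1)
          = ∏ e ∈ (univ : Finset (Fin N)).offDiag.filter (fun e => ¬ e.1 = k),
            (y e.2 - y e.1) ^ (a e.1) := by
        apply Finset.prod_congr rfl
        intro e he
        simp only [mem_filter] at he
        rw [Function.update_of_ne he.2]
      rw [hrest]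
      rw [Function.update_self]
      have hpow : ∀ j ∈ (univ : Finset (Fin N)).erase k,
          (y j - y k) ^ (a k) = (y j - y k) * (y j - y k) ^ (a k - 1) := by
        intro j hj
        conv_lhs => rw [show a k = (a k - 1) + 1 from (Nat.succ_pred_eq_of_pos (ha k)).symm]
        rw [pow_succ]
        ring
      rw [Finset.prod_congr rfl hpow, Finset.prod_mul_distrib]
      have hquot : ∏ j ∈ (univ : Finset (Fin N)).erase k, (y j / (y j - y k))
          = (∏ j ∈ (univ : Finset (Fin N)).erase k, y j) *
            (∏ j ∈ (univ : Finset (Fin N)).erase k, (y j - y k))⁻¹ := by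
        rw [← Finset.prod_inv_distrib, ← Finset.prod_mul_distrib]
        exact Finset.prod_congr rfl (fun j hj => div_eq_mul_inv _ _)
      rw [hquot]
      have hD : (∏ j ∈ (univ : Finset (Fin N)).erase k, (y j - y k)) ≠ 0 :=
        Finset.prod_ne_zero_iff.2 (fun j hj => hsub j k (Finset.mem_erase.1 hj).1)
      field_simp
    simp only [hterm]
    rw [← Finset.sum_mul, PM_lagrange hN y hyinj, one_mul]

  · rw [Function.not_injective_iff] at hinj
    obtain ⟨i, j, hxij, hij⟩ := hinj
    have hmem : (i, j) ∈ (univ : Finset (Fin N)).offDiag :=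
      Finset.mem_offDiag.2 ⟨mem_univ _, mem_univ _, hij⟩
    have hmem2 : (j, i) ∈ (univ : Finset (Fin N)).offDiag :=
      Finset.mem_offDiag.2 ⟨mem_univ _, mem_univ _, fun h => hij h.symm⟩
    have hz1 : x j - x i = 0 := by rw [hxij]; ring
    have hz2 : x i - x j = 0 := by rw [hxij]; ring
    rw [Finset.prod_eq_zero hmem
      (by simp only [] ; rw [hz1] ; exact zero_pow (Nat.one_le_iff_ne_zero.1 (ha i)))]
    symm
    apply Finset.sum_eq_zero
    intro k _
    by_cases hik : Function.update a k (a k - 1) i = 0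
    · have hki : i = k := by
        by_contra hne
        rw [Function.update_of_ne hne] at hik
        exact (Nat.one_le_iff_ne_zero.1 (ha i)) hik
      have hjk : ¬ j = k := fun h => hij (by rw [hki, h])
      have haj : Function.update a k (a k - 1) j ≠ 0 := by
        rw [Function.update_of_ne hjk]
        exact Nat.one_le_iff_ne_zero.1 (ha j)
      rw [Finset.prod_eq_zero hmem2 (by simp only [] ; rw [hz2] ; exact zero_pow haj)]
      ring
    · rw [Finset.prod_eq_zero hmem (by simp only [] ; rw [hz1] ; exact zero_pow hik)]
      ring

noncomputable def PMm {N : ℕ} (a : Fin N → ℕ) : (Fin N) →₀ ℕ :=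
  Finsupp.equivFunOnFinite.symm (fun j => (∑ i, a i) - a j)

lemma PMm_apply {N : ℕ} (a : Fin N → ℕ) (j : Fin N) :
    PMm a j = (∑ i, a i) - a j := rfl

lemma PM_prod_X {σ : Type*} [DecidableEq σ] (s : Finset σ) :
    ∏ j ∈ s, (X j : MvPolynomial σ ℤ) = monomial (∑ j ∈ s, Finsupp.single j 1) 1 := by
  induction s using Finset.cons_induction with
  | empty => simp [monomial_zero']
  | cons a s ha ih =>
    rw [Finset.prod_cons, Finset.sum_cons, ih]
    rw [show (X a : MvPolynomial σ ℤ) = monomial (Finsupp.single a 1) 1 from rfl,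
      monomial_mul, one_mul]

lemma PM_aux_lt {N : ℕ} (a : Fin N → ℕ) (ha : ∀ k, 1 ≤ a k) {j k : Fin N} (h : j ≠ k) :
    a j + 1 ≤ ∑ i, a i := by
  have h1 : a j + a k ≤ ∑ i, a i := by
    rw [← Finset.sum_erase_add univ a (mem_univ k)]
    have : a j ≤ ∑ i ∈ univ.erase k, a i :=
      Finset.single_le_sum (fun i _ => Nat.zero_le _) (Finset.mem_erase.2 ⟨h, mem_univ _⟩)
    omega
  have := ha k
  omega

lemma PM_usum_apply {N : ℕ} (k : Fin N) (j : Fin N) :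
    (∑ j' ∈ (univ : Finset (Fin N)).erase k, Finsupp.single j' (1:ℕ)) j
      = if j = k then 0 else 1 := by
  classical
  rw [Finset.sum_apply']
  simp only [Finsupp.single_apply]
  rw [Finset.sum_ite_eq' (univ.erase k) j (fun _ => (1:ℕ))]
  by_cases h : j = k
  · simp [h]
  · simp [h, Finset.mem_erase]

lemma PM_sum_update {N : ℕ} (a : Fin N → ℕ) (ha : ∀ k, 1 ≤ a k) (k : Fin N) :
    ∑ i, Function.update a k (a k - 1) i = (∑ i, a i) - 1 := by
  rw [Finset.sum_update_of_mem (mem_univ k), Finset.sdiff_singleton_eq_erase]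
  have h2 : ∑ i ∈ univ.erase k, a i + a k = ∑ i, a i := Finset.sum_erase_add _ _ (mem_univ k)
  have := ha k
  omega

lemma PM_coeff_rec {N : ℕ} (hN : 0 < N) (a : Fin N → ℕ) (ha : ∀ k, 1 ≤ a k) :
    coeff (PMm a) (PMQ a) = ∑ k : Fin N,
      coeff (PMm (Function.update a k (a k - 1))) (PMQ (Function.update a k (a k - 1))) := by
  rw [PMQ_rec hN a ha, coeff_sum]
  apply Finset.sum_congr rfl
  intro k _
  rw [PM_prod_X, coeff_monomial_mul']
  have hle : (∑ j' ∈ (univ : Finset (Fin N)).erase k, Finsupp.single j' (1:ℕ)) ≤ PMm a := by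
    rw [Finsupp.le_def]
    intro j
    rw [PM_usum_apply, PMm_apply]
    by_cases h : j = k
    · simp [h]
    · simp only [h, if_false]
      have := PM_aux_lt a ha h
      omega
  rw [if_pos hle, one_mul]
  congr 1
  ext j
  rw [Finsupp.tsub_apply, PM_usum_apply, PMm_apply, PMm_apply, PM_sum_update a ha k]
  by_cases h : j = k
  · subst h
    rw [Function.update_self, if_pos rfl]
    have h1 := ha j
    have h2 : a j ≤ ∑ i, a i := Finset.single_le_sum (fun i _ => Nat.zero_le _) (mem_univ j)
    omega
  · rw [Function.update_of_ne h, if_neg h]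
    have := PM_aux_lt a ha h
    omega

lemma PM_pascal {N : ℕ} (hN : 0 < N) (a : Fin N → ℕ) (ha : ∀ k, 1 ≤ a k) :
    Nat.multinomial univ a = ∑ k : Fin N,
      Nat.multinomial univ (Function.update a k (a k - 1)) := by
  have hP : 0 < ∏ i, (a i)! := Finset.prod_pos (fun i _ => Nat.factorial_pos _)
  apply Nat.eq_of_mul_eq_mul_left hP
  rw [Finset.mul_sum]
  have hterm : ∀ k : Fin N, (∏ i, (a i)!) * Nat.multinomial univ (Function.update a k (a k - 1))
      = a k * ((∑ i, a i) - 1)! := by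
    intro k
    have hfac : (∏ i, (a i)!) = a k * ∏ i, ((Function.update a k (a k - 1)) i)! := by
      rw [← Finset.prod_erase_mul univ (fun i => ((Function.update a k (a k - 1)) i)!) (mem_univ k),
        ← Finset.prod_erase_mul univ (fun i => (a i)!) (mem_univ k)]
      have he : ∏ i ∈ univ.erase k, ((Function.update a k (a k - 1)) i)!
          = ∏ i ∈ univ.erase k, (a i)! :=
        Finset.prod_congr rfl (fun i hi => by rw [Function.update_of_ne (Finset.mem_erase.1 hi).1])
      rw [he, Function.update_self, ← mul_assoc, mul_comm (a k), mul_assoc]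
      congr 1
      conv_lhs => rw [show a k = (a k - 1) + 1 from by have := ha k; omega]
      rw [Nat.factorial_succ]
      congr 1
      have := ha k
      omega
    rw [hfac, mul_assoc]
    congr 1
    rw [Nat.multinomial_spec, PM_sum_update a ha k]
  have hA : 1 ≤ ∑ i, a i := by
    calc 1 ≤ a ⟨0, hN⟩ := ha _
      _ ≤ ∑ i, a i := Finset.single_le_sum (fun i _ => Nat.zero_le _) (mem_univ _)
  calc (∏ i, (a i)!) * Nat.multinomial univ a = (∑ i, a i)! := Nat.multinomial_spec _ _
    _ = (∑ i, a i) * ((∑ i, a i) - 1)! := by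
        conv_lhs => rw [show (∑ i, a i) = ((∑ i, a i) - 1) + 1 from by omega]
        rw [Nat.factorial_succ]
        congr 1
        omega
    _ = ∑ k : Fin N, a k * ((∑ i, a i) - 1)! := by rw [Finset.sum_mul]
    _ = ∑ k : Fin N, (∏ i, (a i)!) * Nat.multinomial univ (Function.update a k (a k - 1)) :=
        Finset.sum_congr rfl (fun k _ => (hterm k).symm)

lemma PM_coeff_perm {N : ℕ} (a : Fin N → ℕ) (σp : Equiv.Perm (Fin N)) :
    coeff (PMm (a ∘ σp)) (PMQ (a ∘ σp)) = coeff (PMm a) (PMQ a) := by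
  have hren : rename (⇑σp) (PMQ (a ∘ σp)) = PMQ a := by
    rw [PMQ, map_prod]
    simp only [map_pow, map_sub, rename_X]
    rw [PMQ]
    apply Finset.prod_bij (fun (e : Fin N × Fin N) _ => (σp e.1, σp e.2))
    · intro e he
      rcases Finset.mem_offDiag.1 he with ⟨_, _, hne⟩
      exact Finset.mem_offDiag.2 ⟨mem_univ _, mem_univ _, fun h => hne (σp.injective h)⟩
    · intro e1 h1 e2 h2 h
      have h1' : σp e1.1 = σp e2.1 := congrArg Prod.fst h
      have h2' : σp e1.2 = σp e2.2 := congrArg Prod.snd h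
      exact Prod.ext (σp.injective h1') (σp.injective h2')
    · intro e' he'
      rcases Finset.mem_offDiag.1 he' with ⟨_, _, hne⟩
      refine ⟨(σp.symm e'.1, σp.symm e'.2), Finset.mem_offDiag.2 ⟨mem_univ _, mem_univ _,
        fun h => hne (by simpa using congrArg σp h)⟩, ?_⟩
      simp
    · intro e he
      simp
  have hmap : Finsupp.mapDomain (⇑σp) (PMm (a ∘ σp)) = PMm a := by
    ext j
    rw [Finsupp.mapDomain_equiv_apply]
    rw [PMm_apply, PMm_apply]
    simp only [Function.comp_apply, Equiv.apply_symm_apply]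
    congr 1
    exact Fintype.sum_equiv σp (fun i => a (σp i)) a (fun i => rfl)
  rw [← hmap, ← hren, coeff_rename_mapDomain (⇑σp) σp.injective]

-- support bound helper
def PMCsupp {N : ℕ} (q : MvPolynomial (Fin (N+1)) ℤ) (c : ℕ) : Prop :=
  ∀ m ∈ q.support, m 0 < c

lemma PMCsupp_mul {N : ℕ} {q w : MvPolynomial (Fin (N+1)) ℤ} {c dw : ℕ}
    (hq : PMCsupp q c) (hw : ∀ m ∈ w.support, m 0 ≤ dw) :
    PMCsupp (q * w) (c + dw) := by
  intro m hm
  have := MvPolynomial.support_mul q w hm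
  rw [Finset.mem_add] at this
  obtain ⟨m1, h1, m2, h2, rfl⟩ := this
  have := hq m1 h1
  have := hw m2 h2
  simp only [Finsupp.add_apply]
  omega

lemma PMCsupp_add {N : ℕ} {q w : MvPolynomial (Fin (N+1)) ℤ} {c : ℕ}
    (hq : PMCsupp q c) (hw : PMCsupp w c) : PMCsupp (q + w) c := by
  intro m hm
  have := MvPolynomial.support_add hm
  rw [Finset.mem_union] at this
  rcases this with h | h
  · exact hq m h
  · exact hw m h

lemma PM_supp_X0pow {N : ℕ} (k : ℕ) :
    ∀ m ∈ ((X (0 : Fin (N+1)) ^ k : MvPolynomial (Fin (N+1)) ℤ)).support, m 0 ≤ k := by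
  intro m hm
  rw [MvPolynomial.support_X_pow] at hm
  rw [Finset.mem_singleton] at hm
  subst hm
  simp

lemma PM_supp_Xj {N : ℕ} {j : Fin (N+1)} (hj : j ≠ 0) :
    ∀ m ∈ ((X j : MvPolynomial (Fin (N+1)) ℤ)).support, m 0 ≤ 0 := by
  intro m hm
  rw [MvPolynomial.support_X] at hm
  rw [Finset.mem_singleton] at hm
  subst hm
  simp [Finsupp.single_apply, hj]

lemma PMCsupp_mono {N : ℕ} {q : MvPolynomial (Fin (N+1)) ℤ} {c c' : ℕ}
    (h : c ≤ c') (hq : PMCsupp q c) : PMCsupp q c' :=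
  fun m hm => lt_of_lt_of_le (hq m hm) h

lemma PM_supp_X0 {N : ℕ} :
    ∀ m ∈ ((X (0 : Fin (N+1)) : MvPolynomial (Fin (N+1)) ℤ)).support, m 0 ≤ 1 := by
  intro m hm
  rw [MvPolynomial.support_X, Finset.mem_singleton] at hm
  subst hm
  simp

lemma PM_supp_negXj {N : ℕ} {j : Fin (N+1)} (hj : j ≠ 0) :
    ∀ m ∈ ((- X j : MvPolynomial (Fin (N+1)) ℤ)).support, m 0 ≤ 0 := by
  intro m hm
  rw [MvPolynomial.support_neg] at hm
  exact PM_supp_Xj hj m hm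

-- binomial decomposition
lemma PM_binom {N : ℕ} {j : Fin (N+1)} (hj : j ≠ 0) (b : ℕ) :
    ∃ R : MvPolynomial (Fin (N+1)) ℤ,
      (X 0 - X j) ^ b = (X (0 : Fin (N+1))) ^ b + R ∧ PMCsupp R b := by
  induction b with
  | zero => exact ⟨0, by simp, fun m hm => by simp at hm⟩
  | succ b ih =>
    obtain ⟨R, hR, hRs⟩ := ih
    refine ⟨(X 0)^b * (- X j) + (R * X 0 + R * (- X j)), ?_, ?_⟩
    · rw [pow_succ, hR]
      ring
    · apply PMCsupp_add
      · intro m hm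
        have hmm := MvPolynomial.support_mul ((X (0:Fin (N+1)))^b) (- X j) hm
        rw [Finset.mem_add] at hmm
        obtain ⟨m1, h1, m2, h2, rfl⟩ := hmm
        have hb1 := PM_supp_X0pow (N := N) b m1 h1
        have hb2 := PM_supp_negXj hj m2 h2
        simp only [Finsupp.add_apply]
        omega
      · apply PMCsupp_add
        · exact PMCsupp_mul hRs PM_supp_X0
        · exact PMCsupp_mono (by omega) (PMCsupp_mul (dw := 0) hRs (PM_supp_negXj hj))

-- product decomposition
lemma PM_P0_decomp {N : ℕ} (s : Finset (Fin (N+1))) (h0 : (0 : Fin (N+1)) ∉ s)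
    (b : Fin (N+1) → ℕ) :
    ∃ R : MvPolynomial (Fin (N+1)) ℤ,
      ∏ j ∈ s, (X 0 - X j) ^ (b j) = (X (0 : Fin (N+1))) ^ (∑ j ∈ s, b j) + R ∧
        PMCsupp R (∑ j ∈ s, b j) := by
  induction s using Finset.cons_induction with
  | empty => exact ⟨0, by simp, fun m hm => by simp at hm⟩
  | cons j s hj ih =>
    have hj0 : j ≠ 0 := fun h => h0 (h ▸ Finset.mem_cons_self j s)
    have h0s : (0 : Fin (N+1)) ∉ s := fun h => h0 (Finset.mem_cons_of_mem h)
    obtain ⟨R, hR, hRs⟩ := ih h0s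
    obtain ⟨Rj, hRj, hRjs⟩ := PM_binom hj0 (b j)
    rw [Finset.prod_cons, Finset.sum_cons, hR, hRj]
    refine ⟨(X 0)^(b j) * R + Rj * (X 0)^(∑ j ∈ s, b j) + Rj * R, ?_, ?_⟩
    · rw [pow_add]
      ring
    · apply PMCsupp_add
      · apply PMCsupp_add
        · intro m hm
          have hmm := MvPolynomial.support_mul ((X (0:Fin (N+1)))^(b j)) R hm
          rw [Finset.mem_add] at hmm
          obtain ⟨m1, h1, m2, h2, rfl⟩ := hmm
          have hb1 := PM_supp_X0pow (N := N) (b j) m1 h1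
          have hb2 := hRs m2 h2
          simp only [Finsupp.add_apply]
          omega
        · intro m hm
          have hmm := MvPolynomial.support_mul Rj ((X (0:Fin (N+1)))^(∑ j ∈ s, b j)) hm
          rw [Finset.mem_add] at hmm
          obtain ⟨m1, h1, m2, h2, rfl⟩ := hmm
          have hb1 := hRjs m1 h1
          have hb2 := PM_supp_X0pow (N := N) (∑ j ∈ s, b j) m2 h2
          simp only [Finsupp.add_apply]
          omega
      · intro m hm
        have hmm := MvPolynomial.support_mul Rj R hm
        rw [Finset.mem_add] at hmm
        obtain ⟨m1, h1, m2, h2, rfl⟩ := hmm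
        have hb1 := hRjs m1 h1
        have hb2 := hRs m2 h2
        simp only [Finsupp.add_apply]
        omega

lemma PM_range_succ {N : ℕ} : (0 : Fin (N+1)) ∉ Set.range (Fin.succ : Fin N → Fin (N+1)) := by
  rintro ⟨y, hy⟩
  exact Fin.succ_ne_zero y hy

lemma PM_elim {N : ℕ} (a : Fin (N+1) → ℕ) (h0 : a 0 = 0) :
    coeff (PMm a) (PMQ a) = coeff (PMm (a ∘ Fin.succ)) (PMQ (a ∘ Fin.succ)) := by
  set A := ∑ i, a i with hA
  have hAeq : ∑ i : Fin N, (a ∘ Fin.succ) i = A := by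
    rw [hA, Fin.sum_univ_succ, h0, zero_add]
    rfl
  have hsum_erase : ∑ j ∈ (univ : Finset (Fin (N+1))).erase 0, a j = A := by
    have := Finset.sum_erase_add (univ : Finset (Fin (N+1))) a (mem_univ 0)
    omega
  -- factorization
  have hfac : PMQ a = rename Fin.succ (PMQ (a ∘ Fin.succ)) *
      ∏ j ∈ (univ : Finset (Fin (N+1))).erase 0, (X 0 - X j) ^ (a j) := by
    rw [PMQ, ← Finset.prod_filter_mul_prod_filter_not
      ((univ : Finset (Fin (N+1))).offDiag) (fun e => e.1 = 0)]
    have h1 : ∏ e ∈ ((univ : Finset (Fin (N+1))).offDiag).filter (fun e => e.1 = 0),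
        (X e.2 - X e.1) ^ (a e.1) = (1 : MvPolynomial (Fin (N+1)) ℤ) := by
      apply Finset.prod_eq_one
      intro e he
      rw [Finset.mem_filter] at he
      rw [he.2, h0, pow_zero]
    rw [h1, one_mul]
    rw [← Finset.prod_filter_mul_prod_filter_not
      (((univ : Finset (Fin (N+1))).offDiag).filter (fun e => ¬ e.1 = 0)) (fun e => e.2 = 0)]
    have h2 : (∏ e ∈ (((univ : Finset (Fin (N+1))).offDiag).filter (fun e => ¬ e.1 = 0)).filter
          (fun e => e.2 = 0), (X e.2 - X e.1) ^ (a e.1) : MvPolynomial (Fin (N+1)) ℤ)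
        = ∏ j ∈ (univ : Finset (Fin (N+1))).erase 0, (X (0 : Fin (N+1)) - X j) ^ (a j) := by
      apply Finset.prod_bij (fun (e : Fin (N+1) × Fin (N+1)) _ => e.1)
      · intro e he
        simp only [Finset.mem_filter, mem_offDiag] at he
        exact Finset.mem_erase.2 ⟨he.1.2, mem_univ _⟩
      · intro e1 he1 e2 he2 h
        simp only [Finset.mem_filter, mem_offDiag] at he1 he2
        exact Prod.ext h (he1.2.trans he2.2.symm)
      · intro j hj
        refine ⟨(j, 0), ?_, rfl⟩
        simp only [Finset.mem_filter, mem_offDiag]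
        exact ⟨⟨⟨mem_univ _, mem_univ _, (Finset.mem_erase.1 hj).1⟩, (Finset.mem_erase.1 hj).1⟩, trivial⟩
      · intro e he
        simp only [Finset.mem_filter] at he
        rw [he.2]
    have h3 : (∏ e ∈ (((univ : Finset (Fin (N+1))).offDiag).filter (fun e => ¬ e.1 = 0)).filter
          (fun e => ¬ e.2 = 0), (X e.2 - X e.1) ^ (a e.1) : MvPolynomial (Fin (N+1)) ℤ)
        = rename Fin.succ (PMQ (a ∘ Fin.succ)) := by
      rw [PMQ, map_prod]
      simp only [map_pow, map_sub, rename_X]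
      symm
      apply Finset.prod_bij (fun (e' : Fin N × Fin N) _ => (Fin.succ e'.1, Fin.succ e'.2))
      · intro e' he'
        rcases Finset.mem_offDiag.1 he' with ⟨_, _, hne⟩
        simp only [Finset.mem_filter, mem_offDiag]
        exact ⟨⟨⟨mem_univ _, mem_univ _, fun h => hne ((Fin.succ_injective N) h)⟩,
          Fin.succ_ne_zero _⟩, Fin.succ_ne_zero _⟩
      · intro e1 he1 e2 he2 h
        have h1' := congrArg Prod.fst h
        have h2' := congrArg Prod.snd h
        exact Prod.ext ((Fin.succ_injective N) h1') ((Fin.succ_injective N) h2')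
      · intro e he
        simp only [Finset.mem_filter, mem_offDiag] at he
        obtain ⟨y1, hy1⟩ := Fin.exists_succ_eq.2 he.1.2
        obtain ⟨y2, hy2⟩ := Fin.exists_succ_eq.2 he.2
        refine ⟨(y1, y2), Finset.mem_offDiag.2 ⟨mem_univ _, mem_univ _, ?_⟩, ?_⟩
        · intro h
          apply he.1.1.2.2
          have hss : y1.succ = y2.succ := congrArg Fin.succ h
          rw [hy1, hy2] at hss
          exact hss
        · rw [Prod.ext_iff]
          exact ⟨hy1, hy2⟩
      · intro e' he'
        rfl
    rw [h2, h3]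
    ring
  obtain ⟨R, hR, hRs⟩ := PM_P0_decomp ((univ : Finset (Fin (N+1))).erase 0)
    (fun h => (Finset.mem_erase.1 h).1 rfl) a
  rw [hsum_erase] at hR hRs
  rw [hfac, hR, mul_add, coeff_add]
  have hm0 : (PMm a) 0 = A := by
    rw [PMm_apply, h0]
    rfl
  -- second summand vanishes
  have hzero : coeff (PMm a) (rename Fin.succ (PMQ (a ∘ Fin.succ)) * R) = 0 := by
    rw [← MvPolynomial.notMem_support_iff]
    intro hm
    have hmm := MvPolynomial.support_mul _ _ hm
    rw [Finset.mem_add] at hmm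
    obtain ⟨m1, hm1, m2, hm2, hsum⟩ := hmm
    have h1 : m1 0 = 0 := by
      rw [MvPolynomial.support_rename_of_injective (Fin.succ_injective N)] at hm1
      rw [Finset.mem_image] at hm1
      obtain ⟨u, hu, rfl⟩ := hm1
      exact Finsupp.mapDomain_notin_range u 0 PM_range_succ
    have h2 : m2 0 < A := hRs m2 hm2
    have : (PMm a) 0 = m1 0 + m2 0 := by rw [← hsum]; simp
    omega
  rw [hzero, add_zero]
  -- first summand
  rw [X_pow_eq_monomial, coeff_mul_monomial']
  have hle : Finsupp.single (0 : Fin (N+1)) A ≤ PMm a := by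
    rw [Finsupp.le_def]
    intro j
    rw [Finsupp.single_apply]
    by_cases h : (0 : Fin (N+1)) = j
    · rw [if_pos h, ← h, hm0]
    · rw [if_neg h]
      exact Nat.zero_le _
  rw [if_pos hle, mul_one]
  have hsub : PMm a - Finsupp.single (0 : Fin (N+1)) A
      = Finsupp.mapDomain Fin.succ (PMm (a ∘ Fin.succ)) := by
    ext j
    rw [Finsupp.tsub_apply, Finsupp.single_apply]
    refine Fin.cases ?_ ?_ j
    · rw [if_pos rfl, hm0, Finsupp.mapDomain_notin_range _ _ PM_range_succ]
      omega
    · intro i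
      rw [if_neg (fun h => Fin.succ_ne_zero i h.symm),
        Finsupp.mapDomain_apply (Fin.succ_injective N), PMm_apply, PMm_apply, hAeq]
      simp only [Function.comp_apply, Nat.sub_zero]
      rfl
  rw [hsub, coeff_rename_mapDomain Fin.succ (Fin.succ_injective N)]

lemma PM_mult_eq_of {N1 N2 : ℕ} (f : Fin N1 → ℕ) (g : Fin N2 → ℕ)
    (hs : ∑ i, f i = ∑ i, g i) (hp : ∏ i, (f i)! = ∏ i, (g i)!) :
    Nat.multinomial univ f = Nat.multinomial univ g := by
  have h1 := Nat.multinomial_spec (univ : Finset (Fin N1)) f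
  have h2 := Nat.multinomial_spec (univ : Finset (Fin N2)) g
  have hP : 0 < ∏ i, (f i)! := Finset.prod_pos (fun i _ => Nat.factorial_pos _)
  apply Nat.eq_of_mul_eq_mul_left hP
  rw [h1, hs, ← h2, hp]

lemma PM_dyson_zero (a : Fin 0 → ℕ) : coeff (PMm a) (PMQ a) = Nat.multinomial univ a := by
  have h1 : PMQ a = 1 := by
    rw [PMQ, Finset.univ_eq_empty, Finset.offDiag_empty, Finset.prod_empty]
  have h2 : PMm a = 0 := by
    ext j
    exact j.elim0
  rw [h1, h2]
  rw [show (Nat.multinomial univ a) = 1 from by rw [Finset.univ_eq_empty, Nat.multinomial_empty]]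
  simp [MvPolynomial.coeff_one]

theorem PM_dyson_aux : ∀ (M N : ℕ) (a : Fin N → ℕ), N + (∑ i, a i) ≤ M →
    coeff (PMm a) (PMQ a) = Nat.multinomial univ a := by
  intro M
  induction M with
  | zero =>
    intro N a h
    have hN : N = 0 := by omega
    subst hN
    exact PM_dyson_zero a
  | succ M ih =>
    intro N a h
    match N, a with
    | 0, a => exact PM_dyson_zero a
    | (N'+1), a =>
      have hN : 0 < N' + 1 := Nat.succ_pos _
      by_cases hall : ∀ k, 1 ≤ a k
      · rw [PM_coeff_rec hN a hall, PM_pascal hN a hall, Nat.cast_sum]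
        apply Finset.sum_congr rfl
        intro k _
        apply ih
        have h1 := PM_sum_update a hall k
        have h2 : 1 ≤ ∑ i, a i :=
          le_trans (hall k) (Finset.single_le_sum (fun i _ => Nat.zero_le _) (mem_univ k))
        omega
      · push_neg at hall
        obtain ⟨k, hk⟩ := hall
        have hk0 : a k = 0 := by omega
        set σp : Equiv.Perm (Fin (N'+1)) := Equiv.swap 0 k with hσ
        set b : Fin (N'+1) → ℕ := a ∘ σp with hb
        have hb0 : b 0 = 0 := by
          rw [hb]
          simp only [Function.comp_apply, hσ, Equiv.swap_apply_left]
          exact hk0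
        have hsb : ∑ i, b i = ∑ i, a i := by
          rw [hb]
          exact Fintype.sum_equiv σp (fun i => a (σp i)) a (fun i => rfl)
        have hsbs : ∑ i : Fin N', (b ∘ Fin.succ) i = ∑ i, b i := by
          rw [Fin.sum_univ_succ (f := b), hb0, zero_add]
          rfl
        calc coeff (PMm a) (PMQ a) = coeff (PMm b) (PMQ b) := (PM_coeff_perm a σp).symm
          _ = coeff (PMm (b ∘ Fin.succ)) (PMQ (b ∘ Fin.succ)) := PM_elim b hb0
          _ = Nat.multinomial univ (b ∘ Fin.succ) := by
              apply ih
              omega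
          _ = Nat.multinomial univ b := by
              apply congrArg (Nat.cast : ℕ → ℤ)
              apply PM_mult_eq_of
              · exact hsbs
              · rw [Fin.prod_univ_succ (f := fun i => (b i)!), hb0]
                simp [Nat.factorial_zero]
          _ = Nat.multinomial univ a := by
              apply congrArg (Nat.cast : ℕ → ℤ)
              apply PM_mult_eq_of
              · exact hsb
              · rw [hb]
                exact Fintype.prod_equiv σp (fun i => (a (σp i))!) (fun i => (a i)!)
                  (fun i => rfl)

theorem PM_dyson {N : ℕ} (a : Fin N → ℕ) :
    coeff (PMm a) (PMQ a) = Nat.multinomial univ a :=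
  PM_dyson_aux (N + ∑ i, a i) N a le_rfl

-- ### Part 2: Combinatorial Nullstellensatz for the full grid over a finite field
section Grid

variable {K : Type*} [Field K] [Fintype K] [DecidableEq K]

lemma PM_sum_pow_card_sub_one : ∑ c : K, c ^ (Fintype.card K - 1) = -1 := by
  have hq : 2 ≤ Fintype.card K := Fintype.one_lt_card
  have hsplit : ∑ c : K, c ^ (Fintype.card K - 1)
      = (0:K) ^ (Fintype.card K - 1) + ∑ c ∈ (univ : Finset K).erase 0, c ^ (Fintype.card K - 1) := by
    exact (Finset.add_sum_erase _ (fun c : K => c ^ (Fintype.card K - 1)) (mem_univ (0:K))).symm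
  rw [hsplit, zero_pow (by omega), zero_add]
  have hone : ∀ c ∈ (univ : Finset K).erase 0, c ^ (Fintype.card K - 1) = 1 := by
    intro c hc
    exact FiniteField.pow_card_sub_one_eq_one c (Finset.mem_erase.1 hc).1
  rw [Finset.sum_congr rfl hone, Finset.sum_const, Finset.card_erase_of_mem (mem_univ _),
    Finset.card_univ, nsmul_eq_mul, mul_one]
  have : ((Fintype.card K - 1 : ℕ) : K) = (Fintype.card K : K) - 1 := by
    push_cast [Nat.cast_sub (by omega : 1 ≤ Fintype.card K)]
    ring
  rw [this, FiniteField.cast_card_eq_zero, zero_sub]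

lemma PM_grid {n : ℕ} (f : MvPolynomial (Fin n) K) (t : ℕ)
    (ht : t ≤ Fintype.card K - 1) (hdeg : f.totalDegree ≤ n * t)
    (mt : Fin n →₀ ℕ) (hmt : ∀ j, mt j = t)
    (hcoeff : coeff mt f ≠ 0) :
    ∃ x : Fin n → K, eval x f ≠ 0 := by
  set q := Fintype.card K with hq
  have hq2 : 2 ≤ q := Fintype.one_lt_card
  set r := q - 1 - t with hr
  -- the grid sum
  set T : K := ∑ x : Fin n → K, eval x f * ∏ i, (x i) ^ r with hT
  have hTval : T = coeff mt f * (-1 : K) ^ n := by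
    have hterm : ∀ x : Fin n → K, eval x f * ∏ i, (x i) ^ r
        = ∑ m ∈ f.support, coeff m f * ∏ i, (x i) ^ (m i + r) := by
      intro x
      rw [eval_eq', Finset.sum_mul]
      apply Finset.sum_congr rfl
      intro m _
      rw [mul_assoc, ← Finset.prod_mul_distrib]
      congr 1
      apply Finset.prod_congr rfl
      intro i _
      rw [pow_add]
    have hswap : T = ∑ m ∈ f.support, coeff m f * ∏ i, (∑ c : K, c ^ (m i + r)) := by
      rw [hT]
      rw [Finset.sum_congr rfl (fun x _ => hterm x), Finset.sum_comm]
      apply Finset.sum_congr rfl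
      intro m _
      rw [← Finset.mul_sum]
      congr 1
      rw [Finset.prod_univ_sum]
      rw [Fintype.piFinset_univ]
    rw [hswap]
    by_cases hmem : mt ∈ f.support
    · rw [Finset.sum_eq_single mt]
      · congr 1
        have : ∀ i : Fin n, mt i + r = q - 1 := by
          intro i
          rw [hmt i]
          omega
        rw [Finset.prod_congr rfl (fun i _ => by rw [this i])]
        rw [Finset.prod_congr rfl (fun (i : Fin n) _ => PM_sum_pow_card_sub_one (K := K))]
        rw [Finset.prod_const, Finset.card_univ, Fintype.card_fin]
      · intro m hm hne
        -- some exponent is < t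
        have hex : ∃ i, m i < t := by
          by_contra hno
          push_neg at hno
          have hall : ∀ i, m i = t := by
            intro i
            by_contra hi
            have hlt : t < m i := lt_of_le_of_ne (hno i) (fun h => hi h.symm)
            have hsum : ∑ i, m i ≤ n * t := by
              calc ∑ i, m i = ∑ i ∈ m.support, m i := by
                    symm
                    apply Finset.sum_subset (Finset.subset_univ _)
                    intro j _ hj
                    exact Finsupp.notMem_support_iff.1 hj
                _ ≤ f.totalDegree := MvPolynomial.le_totalDegree hm
                _ ≤ n * t := hdeg
            have hge : ∀ j, t ≤ m j := hno
            have : n * t < ∑ j, m j := by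
              calc n * t = ∑ _j : Fin n, t := by
                    rw [Finset.sum_const, Finset.card_univ, Fintype.card_fin, smul_eq_mul, mul_comm]
                _ < ∑ j, m j := by
                    exact Finset.sum_lt_sum (fun j _ => hge j) ⟨i, mem_univ i, hlt⟩
            omega
          apply hne
          ext j
          rw [hall j, hmt j]
        obtain ⟨i, hi⟩ := hex
        have hzero : (∑ c : K, c ^ (m i + r)) = 0 := by
          apply FiniteField.sum_pow_lt_card_sub_one
          omega
        rw [Finset.prod_eq_zero (mem_univ i) hzero, mul_zero]
      · intro hmem'
        exact absurd hmem hmem'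
    · exact absurd (MvPolynomial.mem_support_iff.2 hcoeff) hmem
  have hTne : T ≠ 0 := by
    rw [hTval]
    exact mul_ne_zero hcoeff (pow_ne_zero _ (neg_ne_zero.2 one_ne_zero))
  obtain ⟨x, _, hx⟩ := Finset.exists_ne_zero_of_sum_ne_zero hTne
  exact ⟨x, fun h => hx (by rw [h, zero_mul])⟩

end Grid

-- ### Part 3: assembly
section Apply

lemma PM_perturb {K : Type*} [CommRing K] {n : ℕ} {ι : Type*} [DecidableEq ι] (s : Finset ι)
    (L : ι → MvPolynomial (Fin n) K) (hL : ∀ e, (L e).totalDegree ≤ 1) (c : ι → K) :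
    ∃ E : MvPolynomial (Fin n) K,
      ∏ e ∈ s, (L e + C (c e)) = (∏ e ∈ s, L e) + E ∧
      (E = 0 ∨ E.totalDegree + 1 ≤ s.card) := by
  induction s using Finset.cons_induction with
  | empty => exact ⟨0, by simp, Or.inl rfl⟩
  | cons e s' he ih =>
    obtain ⟨E', hE', hd⟩ := ih
    have hprodbound : (∏ a ∈ s', (L a + C (c a))).totalDegree ≤ s'.card := by
      calc (∏ a ∈ s', (L a + C (c a))).totalDegree
          ≤ ∑ a ∈ s', (L a + C (c a)).totalDegree := totalDegree_finset_prod _ _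
        _ ≤ ∑ _a ∈ s', 1 := by
            apply Finset.sum_le_sum
            intro a _
            calc (L a + C (c a)).totalDegree ≤ max (L a).totalDegree (C (c a)).totalDegree :=
                  totalDegree_add _ _
              _ ≤ 1 := max_le (hL a) (le_trans (le_of_eq (totalDegree_C _)) (Nat.zero_le 1))
        _ = s'.card := by rw [Finset.sum_const, smul_eq_mul, mul_one]
    refine ⟨L e * E' + C (c e) * ∏ a ∈ s', (L a + C (c a)), ?_, ?_⟩
    · rw [Finset.prod_cons, Finset.prod_cons, hE']
      ring
    · right
      rw [Finset.card_cons]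
      have h2 : (C (c e) * ∏ a ∈ s', (L a + C (c a))).totalDegree ≤ s'.card := by
        calc (C (c e) * ∏ a ∈ s', (L a + C (c a))).totalDegree
            ≤ (C (c e)).totalDegree + (∏ a ∈ s', (L a + C (c a))).totalDegree :=
              totalDegree_mul _ _
          _ ≤ s'.card := by rw [totalDegree_C]; omega
      have h1 : (L e * E').totalDegree ≤ s'.card := by
        rcases hd with h | h
        · rw [h, mul_zero]
          exact Nat.zero_le _
        · calc (L e * E').totalDegree ≤ (L e).totalDegree + E'.totalDegree :=
              totalDegree_mul _ _
            _ ≤ s'.card := by have := hL e; omega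
      have := totalDegree_add (L e * E') (C (c e) * ∏ a ∈ s', (L a + C (c a)))
      omega

lemma PM_coeff_perturb {K : Type*} [CommRing K] {n : ℕ} {ι : Type*} [DecidableEq ι]
    (s : Finset ι) (L : ι → MvPolynomial (Fin n) K) (hL : ∀ e, (L e).totalDegree ≤ 1)
    (c : ι → K) (m : Fin n →₀ ℕ) (hm : ∑ i, m i = s.card) :
    coeff m (∏ e ∈ s, (L e + C (c e))) = coeff m (∏ e ∈ s, L e) := by
  obtain ⟨E, hE, hd⟩ := PM_perturb s L hL c
  rw [hE, coeff_add]
  rcases hd with h | h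
  · rw [h, coeff_zero, add_zero]
  · have hsupp : ∑ i ∈ m.support, m i = ∑ i, m i := by
      apply Finset.sum_subset (Finset.subset_univ _)
      intro j _ hj
      exact Finsupp.notMem_support_iff.1 hj
    have hz : coeff m E = 0 := by
      apply coeff_eq_zero_of_totalDegree_lt
      omega
    rw [hz, add_zero]

lemma PM_swap_prod {K : Type*} [CommRing K] {n : ℕ} :
    ∏ e ∈ (univ : Finset (Fin n)).offDiag, ((X e.1 - X e.2 : MvPolynomial (Fin n) K)) ^ 2
      = ∏ e ∈ (univ : Finset (Fin n)).offDiag, ((X e.2 - X e.1 : MvPolynomial (Fin n) K)) ^ 2 := by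
  apply Finset.prod_bij (fun (e : Fin n × Fin n) _ => (e.2, e.1))
  · intro e he
    rcases Finset.mem_offDiag.1 he with ⟨_, _, hne⟩
    exact Finset.mem_offDiag.2 ⟨mem_univ _, mem_univ _, fun h => hne h.symm⟩
  · intro e1 h1 e2 h2 h
    have h1' := congrArg Prod.fst h
    have h2' := congrArg Prod.snd h
    exact Prod.ext h2' h1'
  · intro e he
    rcases Finset.mem_offDiag.1 he with ⟨_, _, hne⟩
    exact ⟨(e.2, e.1), Finset.mem_offDiag.2 ⟨mem_univ _, mem_univ _, fun h => hne h.symm⟩, rfl⟩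
  · intro e he
    rfl

theorem preissmann_mischler (n : ℕ) (p : ℕ) (hp : p.Prime) (hpn : 2 * n + 1 ≤ p)
    (d : Fin n → ℤ) (hd : ∀ i, 0 < d i) (hpd : ∀ i, ¬ (p : ℤ) ∣ d i) :
    ∃ x y : Fin n → ℤ,
      Function.Injective (Sum.elim (fun i => ((x i : ZMod p))) (fun i => ((y i : ZMod p)))) ∧
      ∀ i, ((x i + d i : ℤ) : ZMod p) = ((y i : ℤ) : ZMod p) := by
  haveI : Fact p.Prime := ⟨hp⟩
  set dK : Fin n → ZMod p := fun i => ((d i : ℤ) : ZMod p) with hdKdef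
  have hdK : ∀ i, dK i ≠ 0 := fun i h => hpd i ((ZMod.intCast_zmod_eq_zero_iff_dvd _ _).1 h)
  set I : Finset ((Fin n × Fin n) × Bool) :=
    (univ : Finset (Fin n)).offDiag ×ˢ (univ : Finset Bool) with hIdef
  set L : (Fin n × Fin n) × Bool → MvPolynomial (Fin n) (ZMod p) :=
    fun e => X e.1.1 - X e.1.2 with hLdef
  set c : (Fin n × Fin n) × Bool → ZMod p :=
    fun e => if e.2 then dK e.1.1 else (if e.1.1 < e.1.2 then 0 else dK e.1.1 - dK e.1.2)
    with hcdef
  set f : MvPolynomial (Fin n) (ZMod p) := ∏ e ∈ I, (L e + C (c e)) with hfdef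
  set t : ℕ := n * 2 - 2 with htdef
  set mt : Fin n →₀ ℕ := PMm (fun _ : Fin n => 2) with hmtdef
  have hmt : ∀ j, mt j = t := by
    intro j
    rw [hmtdef, PMm_apply]
    rw [Finset.sum_const, Finset.card_univ, Fintype.card_fin, smul_eq_mul]
  have hL1 : ∀ e, (L e).totalDegree ≤ 1 := by
    intro e
    rw [hLdef]
    calc (X e.1.1 - X e.1.2 : MvPolynomial (Fin n) (ZMod p)).totalDegree
        = (X e.1.1 + (- X e.1.2) : MvPolynomial (Fin n) (ZMod p)).totalDegree := by
          rw [sub_eq_add_neg]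
      _ ≤ max (X e.1.1 : MvPolynomial (Fin n) (ZMod p)).totalDegree
            (- X e.1.2 : MvPolynomial (Fin n) (ZMod p)).totalDegree := totalDegree_add _ _
      _ ≤ 1 := by
          rw [MvPolynomial.totalDegree_neg, MvPolynomial.totalDegree_X,
            MvPolynomial.totalDegree_X]
          omega
  have hIcard : I.card = (n * n - n) * 2 := by
    rw [hIdef, Finset.card_product, Finset.offDiag_card, Finset.card_univ, Fintype.card_fin]
    simp
  have hmtsum : ∑ i, mt i = I.card := by
    rw [Finset.sum_congr rfl (fun j _ => hmt j), Finset.sum_const, Finset.card_univ,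
      Fintype.card_fin, smul_eq_mul, hIcard, htdef]
    cases n with
    | zero => rfl
    | succ k =>
      have e0 : (k+1) * 2 - 2 = 2 * k := by omega
      have e1 : (k+1)*(k+1) = (k+1)*k + (k+1) := by ring
      have e2 : (k+1)*(2*k) = 2*((k+1)*k) := by ring
      rw [e0]
      omega
  -- the coefficient of f at mt is the Dyson constant
  have hcoeff : coeff mt f ≠ 0 := by
    rw [hfdef, PM_coeff_perturb I L hL1 c mt hmtsum]
    have hLprod : ∏ e ∈ I, L e
        = MvPolynomial.map (Int.castRingHom (ZMod p)) (PMQ (fun _ : Fin n => 2)) := by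
      rw [hIdef, hLdef, Finset.prod_product]
      have hinner : ∀ e ∈ (univ : Finset (Fin n)).offDiag,
          (∏ _b : Bool, (X e.1 - X e.2 : MvPolynomial (Fin n) (ZMod p)))
            = (X e.1 - X e.2 : MvPolynomial (Fin n) (ZMod p)) ^ 2 := by
        intro e _
        rw [Finset.prod_const, Finset.card_univ, Fintype.card_bool]
      rw [Finset.prod_congr rfl hinner, PM_swap_prod, PMQ, map_prod]
      apply Finset.prod_congr rfl
      intro e _
      rw [map_pow, map_sub, MvPolynomial.map_X, MvPolynomial.map_X]
    rw [hLprod, MvPolynomial.coeff_map, hmtdef, PM_dyson]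
    set cmult : ℕ := Nat.multinomial univ (fun _ : Fin n => 2) with hcm
    have hspec := Nat.multinomial_spec (univ : Finset (Fin n)) (fun _ : Fin n => 2)
    have hfact : 2 ^ n * cmult = (n * 2)! := by
      have hs2 : (∑ _i : Fin n, (2:ℕ)) = n * 2 := by
        rw [Finset.sum_const, Finset.card_univ, Fintype.card_fin, smul_eq_mul]
      have hp2 : (∏ _i : Fin n, (2:ℕ)!) = 2 ^ n := by
        rw [Finset.prod_const, Finset.card_univ, Fintype.card_fin]
        norm_num [Nat.factorial]
      rw [hs2, hp2] at hspec
      rw [hcm]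
      exact hspec
    intro hzero
    have hmodp : (p : ℤ) ∣ (cmult : ℤ) := by
      have : ((cmult : ℤ) : ZMod p) = 0 := by
        rw [← hzero]
        simp
      exact (ZMod.intCast_zmod_eq_zero_iff_dvd _ _).1 this
    have hpdvd : p ∣ cmult := by exact_mod_cast hmodp
    have : p ∣ (n * 2)! := hfact ▸ Dvd.dvd.mul_left hpdvd (2 ^ n)
    have hle := (Nat.Prime.dvd_factorial hp).1 this
    omega
  have hdeg : f.totalDegree ≤ n * t := by
    have h1 : f.totalDegree ≤ I.card := by
      rw [hfdef]
      calc (∏ e ∈ I, (L e + C (c e))).totalDegree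
          ≤ ∑ e ∈ I, (L e + C (c e)).totalDegree := totalDegree_finset_prod _ _
        _ ≤ ∑ _e ∈ I, 1 := by
            apply Finset.sum_le_sum
            intro e _
            calc (L e + C (c e)).totalDegree
                ≤ max (L e).totalDegree (C (c e)).totalDegree := totalDegree_add _ _
              _ ≤ 1 := max_le (hL1 e) (le_trans (le_of_eq (totalDegree_C _)) (Nat.zero_le 1))
        _ = I.card := by rw [Finset.sum_const, smul_eq_mul, mul_one]
    have h2 : ∑ i, mt i = n * t := by
      rw [Finset.sum_congr rfl (fun j _ => hmt j), Finset.sum_const, Finset.card_univ,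
        Fintype.card_fin, smul_eq_mul]
    omega
  have hcardK : Fintype.card (ZMod p) = p := ZMod.card p
  have ht : t ≤ Fintype.card (ZMod p) - 1 := by
    rw [hcardK, htdef]
    omega
  obtain ⟨x, hx⟩ := PM_grid f t ht hdeg mt hmt hcoeff
  -- extract the inequalities
  have hfacne : ∀ e ∈ I, (x e.1.1 - x e.1.2 + c e) ≠ 0 := by
    have hev : eval x f = ∏ e ∈ I, (x e.1.1 - x e.1.2 + c e) := by
      rw [hfdef, eval_prod]
      apply Finset.prod_congr rfl
      intro e _
      rw [hLdef]
      simp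
    rw [hev] at hx
    exact Finset.prod_ne_zero_iff.1 hx
  have hmemI : ∀ i j : Fin n, i ≠ j → ∀ b : Bool, ((i, j), b) ∈ I := by
    intro i j hij b
    rw [hIdef, Finset.mem_product]
    exact ⟨Finset.mem_offDiag.2 ⟨mem_univ _, mem_univ _, hij⟩, mem_univ _⟩
  have hyx : ∀ i j : Fin n, i ≠ j → x i + dK i ≠ x j := by
    intro i j hij h
    apply hfacne ((i, j), true) (hmemI i j hij true)
    rw [hcdef]
    simp only [if_pos]
    rw [show x i - x j + dK i = (x i + dK i) - x j by ring, h, sub_self]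
  have hxx : ∀ i j : Fin n, i ≠ j → x i ≠ x j := by
    intro i j hij h
    rcases lt_or_gt_of_ne hij with hlt | hgt
    · apply hfacne ((i, j), false) (hmemI i j hij false)
      rw [hcdef]
      simp only [Bool.false_eq_true, if_false, if_pos hlt]
      rw [h, sub_self, add_zero]
    · apply hfacne ((j, i), false) (hmemI j i (Ne.symm hij) false)
      rw [hcdef]
      simp only [Bool.false_eq_true, if_false, if_pos hgt]
      rw [h, sub_self, add_zero]
  have hyy : ∀ i j : Fin n, i ≠ j → x i + dK i ≠ x j + dK j := by
    intro i j hij h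
    rcases lt_or_gt_of_ne hij with hlt | hgt
    · apply hfacne ((j, i), false) (hmemI j i (Ne.symm hij) false)
      rw [hcdef]
      have : ¬ j < i := not_lt_of_gt hlt
      simp only [Bool.false_eq_true, if_false, if_neg this]
      rw [show x j - x i + (dK j - dK i) = (x j + dK j) - (x i + dK i) by ring, h, sub_self]
    · apply hfacne ((i, j), false) (hmemI i j hij false)
      rw [hcdef]
      have : ¬ i < j := not_lt_of_gt hgt
      simp only [Bool.false_eq_true, if_false, if_neg this]
      rw [show x i - x j + (dK i - dK j) = (x i + dK i) - (x j + dK j) by ring, h, sub_self]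
  have hself : ∀ i : Fin n, x i ≠ x i + dK i := by
    intro i h
    apply hdK i
    have := congrArg (fun z => z - x i) h
    simpa using this.symm
  -- build the integer witnesses
  refine ⟨fun i => ((x i).val : ℤ), fun i => ((x i).val : ℤ) + d i, ?_, fun i => rfl⟩
  have hcast : ∀ i : Fin n, ((((x i).val : ℤ)) : ZMod p) = x i := by
    intro i
    push_cast
    exact ZMod.natCast_rightInverse (x i)
  have hcast2 : ∀ i : Fin n, ((((x i).val : ℤ) + d i : ℤ) : ZMod p) = x i + dK i := by
    intro i
    have hsplit : ((((x i).val : ℤ) + d i : ℤ) : ZMod p)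
        = ((((x i).val : ℤ)) : ZMod p) + ((d i : ℤ) : ZMod p) := by
      push_cast
      ring
    rw [hsplit, hcast i]
  intro u v huv
  match u, v with
  | Sum.inl i, Sum.inl j =>
    simp only [Sum.elim_inl] at huv
    rw [hcast i, hcast j] at huv
    by_cases hij : i = j
    · rw [hij]
    · exact absurd huv (hxx i j hij)
  | Sum.inl i, Sum.inr j =>
    simp only [Sum.elim_inl, Sum.elim_inr] at huv
    rw [hcast i] at huv
    rw [hcast2 j] at huv
    by_cases hij : i = j
    · subst hij
      exact absurd huv (hself i)
    · exact absurd huv.symm (hyx j i (fun h => hij h.symm))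
  | Sum.inr i, Sum.inl j =>
    simp only [Sum.elim_inl, Sum.elim_inr] at huv
    rw [hcast2 i] at huv
    rw [hcast j] at huv
    by_cases hij : i = j
    · subst hij
      exact absurd huv.symm (hself i)
    · exact absurd huv (hyx i j hij)
  | Sum.inr i, Sum.inr j =>
    simp only [Sum.elim_inr] at huv
    rw [hcast2 i, hcast2 j] at huv
    by_cases hij : i = j
    · rw [hij]
    · exact absurd huv (hyy i j hij)

end Apply
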